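/- The family of metrics g(t) = e^{-2z} dx^2 + e^{2z} dy^2 + 4t dz^2 on R^3, defined for t > 0, satisfies the Ricci flow equation ∂g/∂t = -2 Ric(g(t)). -/

import Mathlib

/- STATEMENT 0: The family of metrics g(t) = e^{-2z} dx² + e^{2z} dy² + 4t dz² on ℝ³
(t > 0) satisfies the Ricci flow equation ∂g/∂t = -2 Ric(g(t)).
We work in coordinates on ℝ³ (modelled as `Fin 3 → ℝ`); below `ricci` is the Ricci
tensor of a metric in coordinates, built from the Christoffel symbols. -/

noncomputable section

/-- Partial derivative in the `i`-th coordinate direction. -/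
def pd {n : ℕ} (i : Fin n) (h : (Fin n → ℝ) → ℝ) (x : Fin n → ℝ) : ℝ :=
  fderiv ℝ h x (Pi.single i 1)

/-- Christoffel symbols Γ^k_{ij} of a metric `g` given in coordinates. -/
def christoffel {n : ℕ} (g : (Fin n → ℝ) → Matrix (Fin n) (Fin n) ℝ)
    (x : Fin n → ℝ) (k i j : Fin n) : ℝ :=
  (1 / 2) * ∑ l, (g x)⁻¹ k l *
    (pd i (fun y => g y l j) x + pd j (fun y => g y l i) x - pd l (fun y => g y i j) x)

/-- The Ricci tensor of a metric `g` in coordinates: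
`R_{ij} = ∂_k Γ^k_{ij} - ∂_i Γ^k_{kj} + Γ^k_{kl} Γ^l_{ij} - Γ^k_{il} Γ^l_{kj}`. -/
def ricci {n : ℕ} (g : (Fin n → ℝ) → Matrix (Fin n) (Fin n) ℝ)
    (x : Fin n → ℝ) (i j : Fin n) : ℝ :=
  (∑ k, pd k (fun y => christoffel g y k i j) x)
    - (∑ k, pd i (fun y => christoffel g y k k j) x)
    + (∑ k, ∑ l, christoffel g x k k l * christoffel g x l i j)
    - (∑ k, ∑ l, christoffel g x k i l * christoffel g x l k j)

/-- The Sol-type expanding soliton metric `e^{-2z} dx² + e^{2z} dy² + 4t dz²`,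
with coordinates `x = p 0`, `y = p 1`, `z = p 2`. -/
def gSolExpander (t : ℝ) (p : Fin 3 → ℝ) : Matrix (Fin 3) (Fin 3) ℝ :=
  Matrix.diagonal ![Real.exp (-2 * p 2), Real.exp (2 * p 2), 4 * t]

/-! ### Auxiliary computations -/

section Aux

set_option linter.unnecessarySeqFocus false
set_option linter.unreachableTactic false
set_option linter.unusedTactic false

lemma pd_const {n : ℕ} (i : Fin n) (c : ℝ) (x : Fin n → ℝ) :
    pd i (fun _ => c) x = 0 := by
  simp [pd]

lemma hasFDerivAt_aexp (a c : ℝ) (x : Fin 3 → ℝ) :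
    HasFDerivAt (fun y : Fin 3 → ℝ => a * Real.exp (c * y 2))
      ((a * c * Real.exp (c * x 2)) • (ContinuousLinearMap.proj 2 : (Fin 3 → ℝ) →L[ℝ] ℝ)) x := by
  have h1 : HasFDerivAt (fun y : Fin 3 → ℝ => y 2)
      (ContinuousLinearMap.proj 2 : (Fin 3 → ℝ) →L[ℝ] ℝ) x :=
    (ContinuousLinearMap.proj 2 : (Fin 3 → ℝ) →L[ℝ] ℝ).hasFDerivAt
  have h2 := ((h1.const_mul c).exp).const_mul a
  convert h2 using 1 <;> try rfl
  ext v
  simp [Real.exp]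
  ring

lemma pd_aexp (a c : ℝ) (i : Fin 3) (x : Fin 3 → ℝ) :
    pd i (fun y => a * Real.exp (c * y 2)) x
      = (if i = 2 then a * c * Real.exp (c * x 2) else 0) := by
  rw [pd, (hasFDerivAt_aexp a c x).fderiv]
  rcases eq_or_ne i 2 with h | h <;> simp [h, Pi.single_apply]

lemma pd_exp (c : ℝ) (i : Fin 3) (x : Fin 3 → ℝ) :
    pd i (fun y => Real.exp (c * y 2)) x
      = (if i = 2 then c * Real.exp (c * x 2) else 0) := by
  simpa using pd_aexp 1 c i x

lemma g_inv (t : ℝ) (ht : 0 < t) (p : Fin 3 → ℝ) :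
    (gSolExpander t p)⁻¹
      = Matrix.diagonal ![Real.exp (2 * p 2), Real.exp (-2 * p 2), (4 * t)⁻¹] := by
  apply Matrix.inv_eq_right_inv
  rw [gSolExpander, Matrix.diagonal_mul_diagonal]
  ext i j
  fin_cases i <;> fin_cases j <;>
    simp [Matrix.diagonal, Matrix.one_apply, ← Real.exp_add] <;>
    field_simp <;> ring

/-- The closed-form table of Christoffel symbols of `gSolExpander t`. -/
def chv (t : ℝ) (p : Fin 3 → ℝ) (k i j : Fin 3) : ℝ :=
  ![![![(0:ℝ),0,-1],![0,0,0],![-1,0,0]],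
    ![![0,0,0],![(0:ℝ),0,1],![0,1,0]],
    ![![(4*t)⁻¹ * Real.exp (-2*p 2),0,0],![0,-((4*t)⁻¹ * Real.exp (2*p 2)),0],![0,0,0]]] k i j

set_option maxHeartbeats 4000000 in
lemma christoffel_eq (t : ℝ) (ht : 0 < t) (p : Fin 3 → ℝ) (k i j : Fin 3) :
    christoffel (gSolExpander t) p k i j = chv t p k i j := by
  have e00 : (fun y : Fin 3 → ℝ => gSolExpander t y 0 0) = fun y => Real.exp (-2 * y 2) := rfl
  have e11 : (fun y : Fin 3 → ℝ => gSolExpander t y 1 1) = fun y => Real.exp (2 * y 2) := rfl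
  have e22 : (fun y : Fin 3 → ℝ => gSolExpander t y 2 2) = fun _ => 4 * t := rfl
  have e01 : (fun y : Fin 3 → ℝ => gSolExpander t y 0 1) = fun _ => (0:ℝ) := rfl
  have e10 : (fun y : Fin 3 → ℝ => gSolExpander t y 1 0) = fun _ => (0:ℝ) := rfl
  have e02 : (fun y : Fin 3 → ℝ => gSolExpander t y 0 2) = fun _ => (0:ℝ) := rfl
  have e20 : (fun y : Fin 3 → ℝ => gSolExpander t y 2 0) = fun _ => (0:ℝ) := rfl
  have e12 : (fun y : Fin 3 → ℝ => gSolExpander t y 1 2) = fun _ => (0:ℝ) := rfl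
  have e21 : (fun y : Fin 3 → ℝ => gSolExpander t y 2 1) = fun _ => (0:ℝ) := rfl
  have hcase : ∀ m : Fin 3, m = 0 ∨ m = 1 ∨ m = 2 := by decide
  rcases hcase k with rfl | rfl | rfl <;> rcases hcase i with rfl | rfl | rfl <;>
      rcases hcase j with rfl | rfl | rfl <;>
    simp only [christoffel, g_inv t ht, Fin.sum_univ_three,
      e00, e11, e22, e01, e10, e02, e20, e12, e21, pd_exp, pd_const,
      Matrix.diagonal_apply, Fin.reduceEq, reduceIte, Matrix.cons_val_zero,
      Matrix.cons_val_one, Matrix.head_cons, Matrix.cons_val_two, Matrix.tail_cons,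
      Matrix.head_fin_const] <;>
    norm_num [chv, Matrix.vecHead, Matrix.vecTail] <;>
    first
    | ring1
    | (rw [← Real.exp_add]; norm_num)
    | (simp [Real.exp_neg]; try field_simp [Real.exp_ne_zero])

lemma pd_exp_m2 (a : ℝ) (i : Fin 3) (x : Fin 3 → ℝ) :
    pd i (fun y => a * Real.exp (-(2 * y 2))) x
      = if i = 2 then -2 * (a * Real.exp (-(2 * x 2))) else 0 := by
  have h : (fun y : Fin 3 → ℝ => a * Real.exp (-(2 * y 2)))
      = fun y => a * Real.exp ((-2) * y 2) := by funext y; norm_num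
  rw [h, pd_aexp]
  norm_num
  ring_nf

lemma pd_exp_p2 (a : ℝ) (i : Fin 3) (x : Fin 3 → ℝ) :
    pd i (fun y => a * Real.exp (2 * y 2)) x
      = if i = 2 then 2 * (a * Real.exp (2 * x 2)) else 0 := by
  rw [pd_aexp]
  norm_num
  ring_nf

lemma pd_nexp_p2 (a : ℝ) (i : Fin 3) (x : Fin 3 → ℝ) :
    pd i (fun y => -(a * Real.exp (2 * y 2))) x
      = if i = 2 then -2 * (a * Real.exp (2 * x 2)) else 0 := by
  have h : (fun y : Fin 3 → ℝ => -(a * Real.exp (2 * y 2)))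
      = fun y => (-a) * Real.exp (2 * y 2) := by funext y; ring
  rw [h, pd_aexp]
  norm_num
  ring_nf

set_option maxHeartbeats 4000000 in
lemma pd_chv (t : ℝ) (a k i j : Fin 3) (x : Fin 3 → ℝ) :
    pd a (fun y => chv t y k i j) x
      = if a = 2 ∧ k = 2 ∧ i = 0 ∧ j = 0 then -2 * ((4*t)⁻¹ * Real.exp (-(2 * x 2)))
        else if a = 2 ∧ k = 2 ∧ i = 1 ∧ j = 1 then -2 * ((4*t)⁻¹ * Real.exp (2 * x 2))
        else 0 := by
  have hcase : ∀ m : Fin 3, m = 0 ∨ m = 1 ∨ m = 2 := by decide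
  rcases hcase k with rfl | rfl | rfl <;> rcases hcase i with rfl | rfl | rfl <;>
      rcases hcase j with rfl | rfl | rfl <;>
    norm_num [chv, pd_const, pd_exp_m2, pd_exp_p2, pd_nexp_p2, Fin.ext_iff, Matrix.cons_val_two, Matrix.tail_cons, Matrix.head_cons]

set_option maxHeartbeats 4000000 in
lemma ricci_eq (t : ℝ) (ht : 0 < t) (p : Fin 3 → ℝ) (i j : Fin 3) :
    ricci (gSolExpander t) p i j = if i = 2 ∧ j = 2 then -2 else 0 := by
  have hfun : ∀ (k a b : Fin 3),
      (fun y => christoffel (gSolExpander t) y k a b) = fun y => chv t y k a b :=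
    fun k a b => funext fun y => christoffel_eq t ht y k a b
  have hcase : ∀ m : Fin 3, m = 0 ∨ m = 1 ∨ m = 2 := by decide
  rcases hcase i with rfl | rfl | rfl <;> rcases hcase j with rfl | rfl | rfl <;>
    simp only [ricci, Fin.sum_univ_three, hfun, pd_chv, christoffel_eq t ht] <;>
    norm_num [chv, Fin.ext_iff, Matrix.vecHead, Matrix.vecTail, Matrix.cons_val_two, Matrix.tail_cons, Matrix.head_cons] <;>
    ring_nf <;>
    norm_num [mul_comm]

end Aux

/-- The Sol-type expanding soliton satisfies the Ricci flow equation
`∂g/∂t = -2 Ric(g(t))` for all `t > 0`. -/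
theorem sol_expander_is_ricci_flow :
    ∀ t : ℝ, 0 < t → ∀ (p : Fin 3 → ℝ) (i j : Fin 3),
      HasDerivAt (fun s => gSolExpander s p i j)
        (-2 * ricci (gSolExpander t) p i j) t := by
  intro t ht p i j
  rw [ricci_eq t ht p i j]
  have h00 : (fun s : ℝ => gSolExpander s p 0 0) = fun _ => Real.exp (-2 * p 2) := rfl
  have h11 : (fun s : ℝ => gSolExpander s p 1 1) = fun _ => Real.exp (2 * p 2) := rfl
  have h22 : (fun s : ℝ => gSolExpander s p 2 2) = fun s => 4 * s := rfl
  have h01 : (fun s : ℝ => gSolExpander s p 0 1) = fun _ => (0:ℝ) := rfl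
  have h10 : (fun s : ℝ => gSolExpander s p 1 0) = fun _ => (0:ℝ) := rfl
  have h02 : (fun s : ℝ => gSolExpander s p 0 2) = fun _ => (0:ℝ) := rfl
  have h20 : (fun s : ℝ => gSolExpander s p 2 0) = fun _ => (0:ℝ) := rfl
  have h12 : (fun s : ℝ => gSolExpander s p 1 2) = fun _ => (0:ℝ) := rfl
  have h21 : (fun s : ℝ => gSolExpander s p 2 1) = fun _ => (0:ℝ) := rfl
  have hcase : ∀ m : Fin 3, m = 0 ∨ m = 1 ∨ m = 2 := by decide
  rcases hcase i with rfl | rfl | rfl <;> rcases hcase j with rfl | rfl | rfl <;>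
    norm_num [Fin.ext_iff] <;>
    first
    | (rw [h00]; exact hasDerivAt_const _ _)
    | (rw [h11]; exact hasDerivAt_const _ _)
    | (rw [h01]; exact hasDerivAt_const _ _)
    | (rw [h10]; exact hasDerivAt_const _ _)
    | (rw [h02]; exact hasDerivAt_const _ _)
    | (rw [h20]; exact hasDerivAt_const _ _)
    | (rw [h12]; exact hasDerivAt_const _ _)
    | (rw [h21]; exact hasDerivAt_const _ _)
    | (rw [h22]; simpa using (hasDerivAt_id t).const_mul (4:ℝ))

end
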